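/- Let d1, d2 ∈ [0, 1/2). For ℓ ∈ ℤ with |ℓ| large, the integral I(ℓ) = ∫₁^∞ [(x-1)^(-2d1) - x^(-2d1)] |ℓ+x|^(d1+d2-1) dx satisfies I(ℓ) = O(|ℓ|^(d1+d2-1)), i.e., there exists K > 0 such that |I(ℓ)| ≤ K |ℓ|^(d1+d2-1) for all ℓ ≠ 0. -/

import Mathlib

open MeasureTheory Real Set


lemma stmt0_mvt {p : ℝ} (hp : 0 < p) {a : ℝ} (ha : 0 < a) :
    a ^ (-p) - (a + 1) ^ (-p) ≤ p * a ^ (-p - 1) := by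
  obtain ⟨c, hc, hceq⟩ := exists_hasDerivAt_eq_slope (fun t : ℝ => t ^ (-p))
    (fun t : ℝ => (-p) * t ^ (-p - 1)) (by linarith : a < a + 1)
    (fun x hx => (Real.continuousAt_rpow_const x (-p)
        (Or.inl (lt_of_lt_of_le ha hx.1).ne')).continuousWithinAt)
    (fun x hx => Real.hasDerivAt_rpow_const (p := -p) (Or.inl (ha.trans hx.1).ne'))
  have h1 : a + 1 - a = 1 := by ring
  rw [h1, div_one] at hceq
  have h2 : c ^ (-p - 1) ≤ a ^ (-p - 1) :=
    Real.rpow_le_rpow_of_nonpos ha hc.1.le (by linarith)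
  nlinarith [mul_le_mul_of_nonneg_left h2 hp.le]

lemma stmt0_absint {α : ℝ} (hα : -1 < α) {r : ℝ} (hr : 0 < r) :
    IntervalIntegrable (fun u : ℝ => |u| ^ α) volume (-r) r ∧
    ∫ u in (-r)..r, |u| ^ α = 2 * (r ^ (α + 1) / (α + 1)) := by
  have hpos : IntervalIntegrable (fun u : ℝ => |u| ^ α) volume 0 r := by
    rw [intervalIntegrable_iff_integrableOn_Ioc_of_le hr.le]
    exact ((intervalIntegrable_iff_integrableOn_Ioc_of_le hr.le).1
      (intervalIntegral.intervalIntegrable_rpow' hα)).congr_fun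
      (fun u hu => by rw [abs_of_pos hu.1]) measurableSet_Ioc
  have hneg : IntervalIntegrable (fun u : ℝ => |u| ^ α) volume (-r) 0 := by
    have h1 : IntervalIntegrable (fun x : ℝ => (-x) ^ α) volume (-0) (-r) :=
      (IntervalIntegrable.iff_comp_neg (f := fun x : ℝ => x ^ α) (a := 0) (b := r)).1
        (intervalIntegral.intervalIntegrable_rpow' hα)
    have h1' := h1.symm
    rw [neg_zero] at h1'
    rw [intervalIntegrable_iff_integrableOn_Ioc_of_le (by linarith : -r ≤ 0)] at h1' ⊢
    exact h1'.congr_fun (fun u hu => by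
      rcases lt_or_eq_of_le hu.2 with h | h
      · rw [abs_of_neg h]
      · subst h; simp) measurableSet_Ioc
  have hvalpos : ∫ u in (0:ℝ)..r, |u| ^ α = r ^ (α + 1) / (α + 1) := by
    rw [intervalIntegral.integral_congr (g := fun u : ℝ => u ^ α) ?_]
    · rw [integral_rpow (Or.inl hα), Real.zero_rpow (by linarith : α + 1 ≠ 0), sub_zero]
    · intro u hu
      rw [uIcc_of_le hr.le] at hu
      simp only
      rw [abs_of_nonneg hu.1]
  have hvalneg : ∫ u in (-r)..(0:ℝ), |u| ^ α = r ^ (α + 1) / (α + 1) := by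
    have h := intervalIntegral.integral_comp_neg (a := (0:ℝ)) (b := r) (fun u : ℝ => |u| ^ α)
    simp only [abs_neg, neg_zero] at h
    rw [← h, hvalpos]
  refine ⟨hneg.trans hpos, ?_⟩
  rw [← intervalIntegral.integral_add_adjacent_intervals hneg hpos, hvalpos, hvalneg]
  ring

lemma stmt0_J {α : ℝ} (hα : -1 < α) {r : ℝ} (hr : 0 < r) (m : ℝ) :
    IntegrableOn (fun x => |x - m| ^ α) (Ioc (m - r) (m + r)) volume ∧
    ∫ x in Ioc (m - r) (m + r), |x - m| ^ α = 2 * (r ^ (α + 1) / (α + 1)) := by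
  obtain ⟨hint, hval⟩ := stmt0_absint hα hr
  constructor
  · have h := hint.comp_sub_right m
    have e1 : -r + m = m - r := by ring
    have e2 : r + m = m + r := by ring
    rw [e1, e2, intervalIntegrable_iff_integrableOn_Ioc_of_le (by linarith)] at h
    exact h
  · rw [← intervalIntegral.integral_of_le (by linarith : m - r ≤ m + r)]
    have h := intervalIntegral.integral_comp_sub_right (a := m - r) (b := m + r)
      (fun u : ℝ => |u| ^ α) m
    rw [h]
    have e1 : m - r - m = -r := by ring
    have e2 : m + r - m = r := by ring
    rw [e1, e2, hval]

/-- Core bound for positive shifts. -/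
lemma stmt0_corepos {f : ℝ → ℝ} {q : ℝ} (hq0 : q ≤ 0)
    (hfnn : ∀ x ∈ Ioi (1:ℝ), 0 ≤ f x) (hfint : IntegrableOn f (Ioi 1) volume)
    {L : ℝ} (hL : 0 < L) :
    ∫ x in Ioi (1:ℝ), f x * |L + x| ^ q ≤ L ^ q * ∫ x in Ioi (1:ℝ), f x := by
  have h := integral_mono_of_nonneg (μ := volume.restrict (Ioi 1))
    (f := fun x => f x * |L + x| ^ q) (g := fun x => L ^ q * f x)
    ((ae_restrict_iff' measurableSet_Ioi).2 (Filter.Eventually.of_forall fun x hx =>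
      mul_nonneg (hfnn x hx) (Real.rpow_nonneg (abs_nonneg _) _)))
    (hfint.const_mul _)
    ((ae_restrict_iff' measurableSet_Ioi).2 (Filter.Eventually.of_forall fun x hx => by
      dsimp only
      have hx1 : (1:ℝ) < x := hx
      have h1 : L ≤ |L + x| := by
        rw [abs_of_pos (by linarith : (0:ℝ) < L + x)]; linarith
      have h2 : |L + x| ^ q ≤ L ^ q := Real.rpow_le_rpow_of_nonpos hL h1 hq0
      calc f x * |L + x| ^ q ≤ f x * L ^ q :=
            mul_le_mul_of_nonneg_left h2 (hfnn x hx)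
        _ = L ^ q * f x := by ring))
  rwa [integral_const_mul] at h

/-- Core bound for negative shifts, `m ≥ 4`. -/
lemma stmt0_core {f : ℝ → ℝ} {q : ℝ} (hq1 : -1 < q) (hq0 : q < 0)
    (hfnn : ∀ x ∈ Ioi (1:ℝ), 0 ≤ f x)
    (hfint : IntegrableOn f (Ioi 1) volume)
    {m B : ℝ} (hm : 4 ≤ m) (hB : 0 ≤ B)
    (hfB : ∀ x ∈ Ioi (1:ℝ), x ∈ Ioc (m/2) (3*m/2) → f x ≤ B) :
    ∫ x in Ioi (1:ℝ), f x * |x - m| ^ q ≤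
      (2:ℝ) ^ (-q) * m ^ q * (∫ x in Ioi (1:ℝ), f x) + B * (2 * ((m/2) ^ (q+1) / (q+1))) := by
  have hm0 : (0:ℝ) < m := by linarith
  set s : Set ℝ := Ioc (m/2) (3*m/2) with hs
  set g : ℝ → ℝ := fun y => |y - m| ^ q with hg
  have hs_meas : MeasurableSet s := measurableSet_Ioc
  obtain ⟨hJint, hJval⟩ := stmt0_J hq1 (show (0:ℝ) < m/2 by linarith) m
  rw [show m - m/2 = m/2 by ring, show m + m/2 = 3*m/2 by ring] at hJint hJval
  have hind_int : Integrable (s.indicator g) (volume.restrict (Ioi 1)) := by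
    rw [integrable_indicator_iff hs_meas]
    rw [IntegrableOn, Measure.restrict_restrict hs_meas]
    exact hJint.mono_set inter_subset_left
  have hmono := integral_mono_of_nonneg (μ := volume.restrict (Ioi 1))
    (f := fun x => f x * |x - m| ^ q)
    (g := fun x => (2:ℝ) ^ (-q) * m ^ q * f x + B * s.indicator g x)
    ((ae_restrict_iff' measurableSet_Ioi).2 (Filter.Eventually.of_forall fun x hx =>
      mul_nonneg (hfnn x hx) (Real.rpow_nonneg (abs_nonneg _) _)))
    ((hfint.const_mul _).add (hind_int.const_mul _))
    ((ae_restrict_iff' measurableSet_Ioi).2 (Filter.Eventually.of_forall fun x hx => by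
      dsimp only
      by_cases hxs : |x - m| < m / 2
      · obtain ⟨ha1, ha2⟩ := abs_lt.1 hxs
        have hxs' : x ∈ s := ⟨by linarith, by linarith⟩
        rw [indicator_of_mem hxs']
        have h1 : f x * |x - m| ^ q ≤ B * g x :=
          mul_le_mul_of_nonneg_right (hfB x hx hxs') (Real.rpow_nonneg (abs_nonneg _) _)
        have h2 : 0 ≤ (2:ℝ) ^ (-q) * m ^ q * f x :=
          mul_nonneg (mul_nonneg (Real.rpow_nonneg (by norm_num) _)
            (Real.rpow_nonneg hm0.le _)) (hfnn x hx)
        calc f x * |x - m| ^ q ≤ B * g x := h1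
          _ ≤ (2:ℝ) ^ (-q) * m ^ q * f x + B * g x := by linarith
      · push_neg at hxs
        have h1 : |x - m| ^ q ≤ (m/2) ^ q :=
          Real.rpow_le_rpow_of_nonpos (by linarith) hxs hq0.le
        have h2 : ((m/2 : ℝ)) ^ q = 2 ^ (-q) * m ^ q := by
          rw [Real.div_rpow hm0.le (by norm_num : (0:ℝ) ≤ 2),
            Real.rpow_neg (by norm_num : (0:ℝ) ≤ 2), div_eq_inv_mul]
        have h3 : f x * |x - m| ^ q ≤ f x * (m/2) ^ q :=
          mul_le_mul_of_nonneg_left h1 (hfnn x hx)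
        have h4 : 0 ≤ B * s.indicator g x :=
          mul_nonneg hB (indicator_nonneg
            (fun y _ => Real.rpow_nonneg (abs_nonneg _) _) x)
        calc f x * |x - m| ^ q ≤ f x * (m/2) ^ q := h3
          _ = (2:ℝ) ^ (-q) * m ^ q * f x := by rw [h2]; ring
          _ ≤ _ := by linarith))
  have hval : ∫ x in Ioi (1:ℝ), ((2:ℝ) ^ (-q) * m ^ q * f x + B * s.indicator g x) =
      (2:ℝ) ^ (-q) * m ^ q * (∫ x in Ioi (1:ℝ), f x) +
        B * ∫ x in Ioi (1:ℝ), s.indicator g x := by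
    rw [integral_add (hfint.const_mul _) (hind_int.const_mul _),
      integral_const_mul, integral_const_mul]
  have hind_val : ∫ x in Ioi (1:ℝ), s.indicator g x ≤ 2 * ((m/2) ^ (q+1) / (q+1)) := by
    rw [setIntegral_indicator hs_meas]
    calc ∫ x in Ioi 1 ∩ s, g x ≤ ∫ x in s, g x := by
          refine setIntegral_mono_set hJint ?_ (HasSubset.Subset.eventuallyLE inter_subset_right)
          exact (ae_restrict_iff' hs_meas).2 (Filter.Eventually.of_forall fun y _ =>
            Real.rpow_nonneg (abs_nonneg _) _)
      _ = 2 * ((m/2) ^ (q+1) / (q+1)) := hJval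
  calc ∫ x in Ioi (1:ℝ), f x * |x - m| ^ q ≤ _ := hmono
    _ = (2:ℝ) ^ (-q) * m ^ q * (∫ x in Ioi (1:ℝ), f x) +
        B * ∫ x in Ioi (1:ℝ), s.indicator g x := hval
    _ ≤ _ := by
        have := mul_le_mul_of_nonneg_left hind_val hB
        linarith


theorem stmt_0 (d1 d2 : ℝ) (hd1 : d1 ∈ Set.Ico (0:ℝ) (1/2))
    (hd2 : d2 ∈ Set.Ico (0:ℝ) (1/2)) :
    ∃ K > (0:ℝ), ∀ ℓ : ℤ, ℓ ≠ 0 →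
      |∫ x in Set.Ioi (1:ℝ),
          ((x - 1) ^ (-2 * d1) - x ^ (-2 * d1)) * |(ℓ : ℝ) + x| ^ (d1 + d2 - 1)| ≤
        K * |(ℓ : ℝ)| ^ (d1 + d2 - 1) := by
  obtain ⟨hd1l, hd1r⟩ := hd1
  obtain ⟨hd2l, hd2r⟩ := hd2
  rcases eq_or_lt_of_le hd1l with hd10 | hd1p
  · -- degenerate case d1 = 0 : the integrand vanishes
    refine ⟨1, one_pos, fun ℓ hℓ => ?_⟩
    have h0 : ∀ x : ℝ, ((x - 1) ^ (-2 * d1) - x ^ (-2 * d1)) * |(ℓ:ℝ) + x| ^ (d1 + d2 - 1)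
        = 0 := by
      intro x
      rw [← hd10]
      norm_num [Real.rpow_zero]
    simp only [h0]
    rw [integral_zero, abs_zero]
    exact mul_nonneg zero_le_one (Real.rpow_nonneg (abs_nonneg _) _)
  · set q : ℝ := d1 + d2 - 1 with hqdef
    have hq1 : -1 < q := by rw [hqdef]; linarith
    have hq0 : q < 0 := by rw [hqdef]; linarith
    set f : ℝ → ℝ := fun x => (x - 1) ^ (-2 * d1) - x ^ (-2 * d1) with hfdef
    have hfnn : ∀ x ∈ Ioi (1:ℝ), 0 ≤ f x := by
      intro x hx
      have hx1 : (1:ℝ) < x := hx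
      have h := Real.rpow_le_rpow_of_nonpos (show (0:ℝ) < x - 1 by linarith)
        (by linarith : x - 1 ≤ x) (by linarith : -2 * d1 ≤ 0)
      exact sub_nonneg.2 h
    have hfub : ∀ x ∈ Ioi (1:ℝ), f x ≤ 2 * d1 * (x - 1) ^ (-2 * d1 - 1) := by
      intro x hx
      have hx1 : (1:ℝ) < x := hx
      have h := stmt0_mvt (p := 2 * d1) (by linarith) (a := x - 1) (by linarith)
      rw [show x - 1 + 1 = x by ring] at h
      have e1 : -(2 * d1) = -2 * d1 := by ring
      rw [e1] at h
      exact h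
    have hfm : Measurable f :=
      ((measurable_id.sub_const 1).pow_const _).sub (measurable_id.pow_const _)
    have hfint : IntegrableOn f (Ioi 1) volume := by
      have hset : Ioc (1:ℝ) 2 ∪ Ioi (2:ℝ) = Ioi 1 := Ioc_union_Ioi_eq_Ioi one_le_two
      rw [← hset]
      refine IntegrableOn.union ?_ ?_
      · have hg : IntegrableOn (fun x : ℝ => (x - 1) ^ (-2 * d1)) (Ioc 1 2) volume := by
          have h := (intervalIntegral.intervalIntegrable_rpow' (r := -2 * d1)
            (by linarith : (-1:ℝ) < -2 * d1) (a := 0) (b := 1)).comp_sub_right 1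
          rw [show (0:ℝ) + 1 = 1 by norm_num, show (1:ℝ) + 1 = 2 by norm_num] at h
          rwa [intervalIntegrable_iff_integrableOn_Ioc_of_le one_le_two] at h
        refine Integrable.mono' hg hfm.aestronglyMeasurable.restrict ?_
        refine (ae_restrict_iff' measurableSet_Ioc).2 (Filter.Eventually.of_forall
          fun x hx => ?_)
        have hx1 : (1:ℝ) < x := hx.1
        have hxI : x ∈ Ioi (1:ℝ) := hx1
        rw [Real.norm_eq_abs, abs_of_nonneg (hfnn x hxI)]
        have h2 : 0 ≤ x ^ (-2 * d1) := Real.rpow_nonneg (by linarith) _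
        show (x - 1) ^ (-2 * d1) - x ^ (-2 * d1) ≤ (x - 1) ^ (-2 * d1)
        linarith
      · have hg : IntegrableOn
            (fun x : ℝ => 2 * d1 * (2 ^ (2 * d1 + 1) * x ^ (-2 * d1 - 1))) (Ioi 2) volume :=
          ((integrableOn_Ioi_rpow_of_lt (by linarith : -2 * d1 - 1 < -1)
            (by norm_num : (0:ℝ) < 2)).const_mul ((2:ℝ) ^ (2 * d1 + 1))).const_mul (2 * d1)
        refine Integrable.mono' hg hfm.aestronglyMeasurable.restrict ?_
        refine (ae_restrict_iff' measurableSet_Ioi).2 (Filter.Eventually.of_forall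
          fun x hx => ?_)
        have hx2 : (2:ℝ) < x := hx
        have hxI : x ∈ Ioi (1:ℝ) := Set.mem_Ioi.2 (by linarith)
        rw [Real.norm_eq_abs, abs_of_nonneg (hfnn x hxI)]
        have h1 := hfub x hxI
        have h2 : (x - 1) ^ (-2 * d1 - 1) ≤ (x/2) ^ (-2 * d1 - 1) :=
          Real.rpow_le_rpow_of_nonpos (by linarith) (by linarith) (by linarith)
        have h3 : ((x/2 : ℝ)) ^ (-2 * d1 - 1) = 2 ^ (2 * d1 + 1) * x ^ (-2 * d1 - 1) := by
          rw [Real.div_rpow (by linarith : (0:ℝ) ≤ x) (by norm_num : (0:ℝ) ≤ 2),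
            show (-2 * d1 - 1 : ℝ) = -(2 * d1 + 1) by ring,
            Real.rpow_neg (by norm_num : (0:ℝ) ≤ 2), div_eq_mul_inv, inv_inv]
          exact mul_comm _ _
        calc f x ≤ 2 * d1 * (x - 1) ^ (-2 * d1 - 1) := h1
          _ ≤ 2 * d1 * (x/2) ^ (-2 * d1 - 1) := mul_le_mul_of_nonneg_left h2 (by linarith)
          _ = 2 * d1 * (2 ^ (2 * d1 + 1) * x ^ (-2 * d1 - 1)) := by rw [h3]
    set C : ℝ := ∫ x in Ioi (1:ℝ), f x with hCdef
    have hC0 : 0 ≤ C := setIntegral_nonneg measurableSet_Ioi hfnn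
    have h2q : (0:ℝ) < 2 ^ (-q) := Real.rpow_pos_of_pos two_pos _
    set D : ℝ := 2 * d1 * 4 ^ (2 * d1 + 1) * (2 * (2 ^ (-(q + 1)) / (q + 1))) with hDdef
    have hD0 : 0 ≤ D := by
      have h4 : (0:ℝ) ≤ 4 ^ (2 * d1 + 1) := Real.rpow_nonneg (by norm_num) _
      have h2 : (0:ℝ) ≤ 2 ^ (-(q + 1)) := Real.rpow_nonneg (by norm_num) _
      have hq : (0:ℝ) < q + 1 := by linarith
      positivity
    set E1 : ℝ := |∫ x in Ioi (1:ℝ), f x * |x - 1| ^ q| with hE1def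
    set E2 : ℝ := |∫ x in Ioi (1:ℝ), f x * |x - 2| ^ q| with hE2def
    set E3 : ℝ := |∫ x in Ioi (1:ℝ), f x * |x - 3| ^ q| with hE3def
    have hE1 : 0 ≤ E1 := abs_nonneg _
    have hE2 : 0 ≤ E2 := abs_nonneg _
    have hE3 : 0 ≤ E3 := abs_nonneg _
    set K : ℝ := C + 2 ^ (-q) * C + D + E1 + 2 * E2 + 3 * E3 + 1 with hKdef
    have h2qC : 0 ≤ 2 ^ (-q) * C := mul_nonneg h2q.le hC0
    have hKpos : 0 < K := by rw [hKdef]; linarith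
    refine ⟨K, hKpos, fun ℓ hℓ => ?_⟩
    have hmain : |∫ x in Ioi (1:ℝ), f x * |(ℓ:ℝ) + x| ^ q| ≤ K * |(ℓ:ℝ)| ^ q := by
      have hInn : 0 ≤ ∫ x in Ioi (1:ℝ), f x * |(ℓ:ℝ) + x| ^ q :=
        setIntegral_nonneg measurableSet_Ioi (fun x hx =>
          mul_nonneg (hfnn x hx) (Real.rpow_nonneg (abs_nonneg _) _))
      rw [abs_of_nonneg hInn]
      rcases hℓ.lt_or_gt with hneg | hpos
      · -- negative ℓ
        set m : ℝ := -(ℓ:ℝ) with hmdef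
        have hlr : (ℓ:ℝ) < 0 := by exact_mod_cast hneg
        have hl1 : (ℓ:ℝ) ≤ -1 := by exact_mod_cast (by omega : ℓ ≤ -1)
        have hm1 : (1:ℝ) ≤ m := by rw [hmdef]; linarith
        have hm0 : (0:ℝ) < m := by linarith
        have habs' : |(ℓ:ℝ)| = m := by rw [hmdef, abs_of_neg hlr]
        have hxm : ∀ x : ℝ, (ℓ:ℝ) + x = x - m := fun x => by rw [hmdef]; ring
        simp only [hxm, habs']
        have hmq : 0 < m ^ q := Real.rpow_pos_of_pos hm0 _
        rcases le_or_gt 4 m with hm4 | hm4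
        · -- |ℓ| ≥ 4
          set B : ℝ := 2 * d1 * (m/4) ^ (-2 * d1 - 1) with hBdef
          have hB0 : 0 ≤ B :=
            mul_nonneg (by linarith) (Real.rpow_nonneg (by linarith) _)
          have hfB : ∀ x ∈ Ioi (1:ℝ), x ∈ Ioc (m/2) (3*m/2) → f x ≤ B := by
            intro x hx hxs
            have hx1 : (1:ℝ) < x := hx
            have h1 := hfub x hx
            have h2 : (m/4 : ℝ) ≤ x - 1 := by
              have := hxs.1; linarith
            have h3 : (x - 1) ^ (-2 * d1 - 1) ≤ (m/4) ^ (-2 * d1 - 1) :=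
              Real.rpow_le_rpow_of_nonpos (by linarith) h2 (by linarith)
            calc f x ≤ 2 * d1 * (x - 1) ^ (-2 * d1 - 1) := h1
              _ ≤ B := by rw [hBdef]; exact mul_le_mul_of_nonneg_left h3 (by linarith)
          have hcore := stmt0_core hq1 hq0 hfnn hfint hm4 hB0 hfB
          have e1 : (m/4 : ℝ) ^ (-2 * d1 - 1) = 4 ^ (2 * d1 + 1) * m ^ (-2 * d1 - 1) := by
            rw [Real.div_rpow hm0.le (by norm_num : (0:ℝ) ≤ 4),
              show (-2 * d1 - 1 : ℝ) = -(2 * d1 + 1) by ring,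
              Real.rpow_neg (by norm_num : (0:ℝ) ≤ 4), div_eq_mul_inv, inv_inv]
            exact mul_comm _ _
          have e2 : ((m/2 : ℝ)) ^ (q + 1) = 2 ^ (-(q + 1)) * m ^ (q + 1) := by
            rw [Real.div_rpow hm0.le (by norm_num : (0:ℝ) ≤ 2),
              Real.rpow_neg (by norm_num : (0:ℝ) ≤ 2), div_eq_inv_mul]
          have e3 : m ^ (-2 * d1 - 1) * m ^ (q + 1) = m ^ (q - 2 * d1) := by
            rw [← Real.rpow_add hm0]; ring_nf
          have e4 : m ^ (q - 2 * d1) ≤ m ^ q :=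
            Real.rpow_le_rpow_of_exponent_le hm1 (by linarith)
          have hstep : B * (2 * ((m/2) ^ (q + 1) / (q + 1))) = D * m ^ (q - 2 * d1) := by
            rw [hBdef, hDdef, e1, e2, ← e3]
            field_simp
          have hBD : B * (2 * ((m/2) ^ (q + 1) / (q + 1))) ≤ D * m ^ q := by
            rw [hstep]
            exact mul_le_mul_of_nonneg_left e4 hD0
          have hKge : 2 ^ (-q) * C + D ≤ K := by rw [hKdef]; linarith
          calc ∫ x in Ioi (1:ℝ), f x * |x - m| ^ q
              ≤ 2 ^ (-q) * m ^ q * C + B * (2 * ((m/2) ^ (q + 1) / (q + 1))) := hcore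
            _ ≤ 2 ^ (-q) * m ^ q * C + D * m ^ q := by linarith
            _ = (2 ^ (-q) * C + D) * m ^ q := by ring
            _ ≤ K * m ^ q := mul_le_mul_of_nonneg_right hKge hmq.le
        · -- |ℓ| ∈ {1, 2, 3}
          have hl4 : -4 < (ℓ:ℝ) := by rw [hmdef] at hm4; linarith
          have hℓ4 : (-4 : ℤ) < ℓ := by exact_mod_cast hl4
          have hcases : ℓ = -1 ∨ ℓ = -2 ∨ ℓ = -3 := by omega
          rcases hcases with rfl | rfl | rfl
          · have hm : m = 1 := by rw [hmdef]; norm_num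
            rw [hm, Real.one_rpow, mul_one]
            have h1 : (∫ x in Ioi (1:ℝ), f x * |x - 1| ^ q) ≤ E1 := by
              rw [hE1def]; exact le_abs_self _
            rw [hKdef]; linarith
          · have hm : m = 2 := by rw [hmdef]; norm_num
            rw [hm]
            have h1 : (∫ x in Ioi (1:ℝ), f x * |x - 2| ^ q) ≤ E2 := by
              rw [hE2def]; exact le_abs_self _
            have h21 : (1:ℝ) ≤ 2 * 2 ^ q := by
              have e : (2:ℝ) * 2 ^ q = 2 ^ (1 + q) := by
                rw [Real.rpow_add two_pos, Real.rpow_one]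
              rw [e]
              calc (1:ℝ) = 2 ^ (0:ℝ) := (Real.rpow_zero 2).symm
                _ ≤ 2 ^ (1 + q) := Real.rpow_le_rpow_of_exponent_le one_le_two (by linarith)
            have h2pos : (0:ℝ) < 2 ^ q := Real.rpow_pos_of_pos two_pos _
            have hK2 : 2 * E2 ≤ K := by rw [hKdef]; linarith
            calc (∫ x in Ioi (1:ℝ), f x * |x - 2| ^ q) ≤ E2 := h1
              _ ≤ E2 * (2 * 2 ^ q) := le_mul_of_one_le_right hE2 h21
              _ = (2 * E2) * 2 ^ q := by ring
              _ ≤ K * 2 ^ q := mul_le_mul_of_nonneg_right hK2 h2pos.le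
          · have hm : m = 3 := by rw [hmdef]; norm_num
            rw [hm]
            have h1 : (∫ x in Ioi (1:ℝ), f x * |x - 3| ^ q) ≤ E3 := by
              rw [hE3def]; exact le_abs_self _
            have h31 : (1:ℝ) ≤ 3 * 3 ^ q := by
              have e : (3:ℝ) * 3 ^ q = 3 ^ (1 + q) := by
                rw [Real.rpow_add (by norm_num : (0:ℝ) < 3), Real.rpow_one]
              rw [e]
              calc (1:ℝ) = 3 ^ (0:ℝ) := (Real.rpow_zero 3).symm
                _ ≤ 3 ^ (1 + q) := Real.rpow_le_rpow_of_exponent_le (by norm_num) (by linarith)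
            have h3pos : (0:ℝ) < 3 ^ q := Real.rpow_pos_of_pos (by norm_num) _
            have hK3 : 3 * E3 ≤ K := by rw [hKdef]; linarith
            calc (∫ x in Ioi (1:ℝ), f x * |x - 3| ^ q) ≤ E3 := h1
              _ ≤ E3 * (3 * 3 ^ q) := le_mul_of_one_le_right hE3 h31
              _ = (3 * E3) * 3 ^ q := by ring
              _ ≤ K * 3 ^ q := mul_le_mul_of_nonneg_right hK3 h3pos.le
      · -- positive ℓ
        have hL : (0:ℝ) < (ℓ:ℝ) := by exact_mod_cast hpos
        have habs' : |(ℓ:ℝ)| = (ℓ:ℝ) := abs_of_pos hL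
        have h := stmt0_corepos hq0.le hfnn hfint hL
        have hCK : C ≤ K := by rw [hKdef]; linarith
        rw [habs']
        calc ∫ x in Ioi (1:ℝ), f x * |(ℓ:ℝ) + x| ^ q ≤ (ℓ:ℝ) ^ q * C := h
          _ = C * (ℓ:ℝ) ^ q := by ring
          _ ≤ K * (ℓ:ℝ) ^ q :=
            mul_le_mul_of_nonneg_right hCK (Real.rpow_pos_of_pos hL _).le
    exact hmain
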